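/- Let Q ∈ S^d_{>0} be a positive definite quadratic form with Delone subdivision D (with vertex-set ℤ^d), let P_1, …, P_n be a representative system of the d-dimensional Delone polytopes in D that are pairwise inequivalent with respect to Q, and for every P_i choose a d-dimensional simplex L_i with vert L_i ⊆ vert P_i. Then the inhomogeneous minimum of Q satisfies μ(Q) ≤ 1 if and only if the block-diagonal matrix diag(BR_{L_1}(Q), …, BR_{L_n}(Q)) is positive semidefinite. -/

import Mathlib

open Matrix Finset MeasureTheory Polynomial

noncomputable section

namespace Vor

variable {d : ℕ}

/-- The space of real `d × d` matrices (quadratic forms live in the symmetric ones). -/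
abbrev Md (d : ℕ) := Matrix (Fin d) (Fin d) ℝ

/-- Trace inner product `⟨A, B⟩ = trace (A * B)` on matrices. -/
def minner (A B : Md d) : ℝ := (A * B).trace

/-- The quadratic form `Q[x] = xᵗ Q x`. -/
def qf (Q : Md d) (x : Fin d → ℝ) : ℝ := x ⬝ᵥ Q.mulVec x

/-- The real vector associated to an integral vector. -/
def intVec (v : Fin d → ℤ) : Fin d → ℝ := fun j => (v j : ℝ)

/-- The lattice `ℤ^d` viewed inside `ℝ^d`. -/
def latticeZ (d : ℕ) : Set (Fin d → ℝ) := Set.range (intVec (d := d))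

/-- A standard periodic set `Λ = ⋃ i, (tᵢ + ℤ^d)`. -/
def IsStdPeriodic (Λ : Set (Fin d → ℝ)) : Prop :=
  ∃ m : ℕ, 0 < m ∧ ∃ t : Fin m → (Fin d → ℝ),
    Λ = {x | ∃ (i : Fin m) (v : Fin d → ℤ), x = t i + intVec v}

/-- The real matrix obtained from an integral matrix. -/
def rmat (U : Matrix (Fin d) (Fin d) ℤ) : Md d := U.map fun z => (z : ℝ)

/-- `U ∈ GL_d(ℤ)`. -/
def IsUnimodular (U : Matrix (Fin d) (Fin d) ℤ) : Prop := IsUnit U.det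

/-- The action `Q ↦ Uᵗ Q U`. -/
def conjQ (U : Matrix (Fin d) (Fin d) ℤ) (Q : Md d) : Md d := (rmat U)ᵀ * Q * rmat U

/-- The action of `GL_d(ℤ)` on subsets of the space of forms. -/
def conjSet (U : Matrix (Fin d) (Fin d) ℤ) (S : Set (Md d)) : Set (Md d) := conjQ U '' S

/-- The rational closure `S̃^d_{≥0}`: positive semidefinite forms that are
`GL_d(ℤ)`-equivalent to a block diagonal form with a zero block and a positive
definite block. -/
def RationalClosure (d : ℕ) : Set (Md d) :=
  {Q | Q.PosSemidef ∧ ∃ U : Matrix (Fin d) (Fin d) ℤ, IsUnimodular U ∧ ∃ k : ℕ, k ≤ d ∧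
    (∀ i j : Fin d, ((i : ℕ) < k ∨ (j : ℕ) < k) → conjQ U Q i j = 0) ∧
    (∀ x : Fin d → ℝ, (∀ i : Fin d, (i : ℕ) < k → x i = 0) → x ≠ 0 → 0 < qf (conjQ U Q) x)}

/-- `P` is a Delone polyhedron of the form `Q` with respect to the point set `Λ`:
`P` is the convex hull of the set `S` of points of `Λ` lying on some sphere
(center `c`, radius `r`) which contains no other point of `Λ` on it or inside. -/
def IsDelonePoly (Λ : Set (Fin d → ℝ)) (Q : Md d) (P : Set (Fin d → ℝ)) : Prop :=
  ∃ S : Set (Fin d → ℝ), S ⊆ Λ ∧ S.Nonempty ∧ P = convexHull ℝ S ∧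
    ∃ (c : Fin d → ℝ) (r : ℝ),
      (∀ v ∈ S, qf Q (c - v) = r ^ 2) ∧ ∀ v ∈ Λ, v ∉ S → r ^ 2 < qf Q (c - v)

/-- The Delone subdivision of `Q` with respect to `Λ`. -/
def DelSub (Λ : Set (Fin d → ℝ)) (Q : Md d) : Set (Set (Fin d → ℝ)) :=
  {P | IsDelonePoly Λ Q P}

/-- The secondary cone of a (Delone) subdivision `D`:
all forms in the rational closure whose Delone subdivision is `D`. -/
def SecCone (Λ : Set (Fin d → ℝ)) (D : Set (Set (Fin d → ℝ))) : Set (Md d) :=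
  {Q | Q ∈ RationalClosure d ∧ DelSub Λ Q = D}

/-- `α` gives the coefficients of an affine combination of the points of `V` representing `w`. -/
def IsAffComb (V : Finset (Fin d → ℝ)) (α : (Fin d → ℝ) → ℝ) (w : Fin d → ℝ) : Prop :=
  (∑ v ∈ V, α v) = 1 ∧ (∑ v ∈ V, α v • v) = w

/-- The form `N_{V,w} = wwᵗ - ∑_{v ∈ V} α_v vvᵗ`. -/
def Nform (V : Finset (Fin d → ℝ)) (α : (Fin d → ℝ) → ℝ) (w : Fin d → ℝ) : Md d :=
  vecMulVec w w - ∑ v ∈ V, α v • vecMulVec v v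

/-- A finite set of points is affinely independent. -/
def AffIndep (V : Finset (Fin d → ℝ)) : Prop :=
  AffineIndependent ℝ (fun v : {x // x ∈ V} => (v : Fin d → ℝ))

/-- Insertion into a finset (classical, to avoid decidability assumptions). -/
def finsert (w : Fin d → ℝ) (V : Finset (Fin d → ℝ)) : Finset (Fin d → ℝ) :=
  letI := Classical.decEq (Fin d → ℝ)
  insert w V

/-- A polyhedron: a finite intersection of closed halfspaces. -/
def IsPolyhedron (P : Set (Fin d → ℝ)) : Prop :=
  ∃ (n : ℕ) (a : Fin n → (Fin d → ℝ)) (b : Fin n → ℝ), P = {x | ∀ i, a i ⬝ᵥ x ≤ b i}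

/-- `F` is a face of `P` (cut out by a supporting hyperplane). -/
def IsFaceOf (F P : Set (Fin d → ℝ)) : Prop :=
  ∃ (a : Fin d → ℝ) (b : ℝ), (∀ x ∈ P, a ⬝ᵥ x ≤ b) ∧ F = {x ∈ P | a ⬝ᵥ x = b}

/-- The (affine) dimension of a set of points. -/
def sdim (S : Set (Fin d → ℝ)) : ℕ := Module.finrank ℝ ↥(vectorSpan ℝ S)

/-- A (face-to-face) polyhedral subdivision of `ℝ^d`. -/
def IsPolySubdiv (D : Set (Set (Fin d → ℝ))) : Prop :=
  (∀ P ∈ D, IsPolyhedron P ∧ P.Nonempty) ∧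
  ⋃₀ D = Set.univ ∧
  (∀ P ∈ D, ∀ F : Set (Fin d → ℝ), IsFaceOf F P → F.Nonempty → F ∈ D) ∧
  ∀ P ∈ D, ∀ P' ∈ D, (P ∩ P').Nonempty → IsFaceOf (P ∩ P') P

/-- `D` has vertex-set `Λ`: every member is the convex hull of its points of `Λ`. -/
def HasVertexSet (Λ : Set (Fin d → ℝ)) (D : Set (Set (Fin d → ℝ))) : Prop :=
  ∀ P ∈ D, P = convexHull ℝ (Λ ∩ P)

/-- A (closed) polyhedral cone in the space of matrices. -/
def IsPolyConeM (C : Set (Md d)) : Prop :=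
  ∃ (n : ℕ) (A : Fin n → Md d), C = {Q | ∀ i, 0 ≤ minner (A i) Q}

/-- `F` is a face of the cone `C` in the space of matrices. -/
def IsFaceOfM (F C : Set (Md d)) : Prop :=
  ∃ A : Md d, (∀ X ∈ C, 0 ≤ minner A X) ∧ F = {X ∈ C | minner A X = 0}

/-- A relatively open polyhedral cone: solutions of finitely many linear equalities and
strict linear inequalities. -/
def IsRelOpenPolyCone (C : Set (Md d)) : Prop :=
  ∃ (n m : ℕ) (A : Fin n → Md d) (B : Fin m → Md d),
    C = {Q | (∀ i, minner (A i) Q = 0) ∧ ∀ j, 0 < minner (B j) Q}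

/-- Condition (a): the linear equalities coming from the `d`-dimensional cells of `D`. -/
def condA (Λ : Set (Fin d → ℝ)) (D : Set (Set (Fin d → ℝ))) (Q : Md d) : Prop :=
  ∀ P ∈ D, sdim P = d →
    ∀ V : Finset (Fin d → ℝ), (↑V : Set (Fin d → ℝ)) ⊆ Λ ∩ P → AffIndep V → V.card = d + 1 →
      ∀ w ∈ Λ ∩ P, ∀ α : (Fin d → ℝ) → ℝ, IsAffComb V α w →
        minner (Nform V α w) Q = 0

/-- Condition (b): the linear strict inequalities coming from the `(d-1)`-dimensional
cells of `D`. -/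
def condB (Λ : Set (Fin d → ℝ)) (D : Set (Set (Fin d → ℝ))) (Q : Md d) : Prop :=
  ∀ F ∈ D, sdim F = d - 1 →
    ∀ P ∈ D, ∀ P' ∈ D, sdim P = d → sdim P' = d → P ≠ P' → F = P ∩ P' →
      ∀ V : Finset (Fin d → ℝ), (↑V : Set (Fin d → ℝ)) ⊆ Λ ∩ F → AffIndep V → V.card = d →
        ∀ w ∈ (Λ ∩ P) \ F, ∀ w' ∈ (Λ ∩ P') \ F,
          ∀ α : (Fin d → ℝ) → ℝ, IsAffComb (finsert w V) α w' →
            0 < minner (Nform (finsert w V) α w') Q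

/-- The lifting map `w_Q(x) = (x, Q[x]) ∈ ℝ^{d+1}`. -/
def liftQ (Q : Md d) (x : Fin d → ℝ) : Fin (d + 1) → ℝ := Fin.snoc x (qf Q x)

/-- Projection `ℝ^{d+1} → ℝ^d` onto the first `d` coordinates. -/
def projd (y : Fin (d + 1) → ℝ) : Fin d → ℝ := fun i => y i.castSucc

/-- `G` is a finite subgroup of `GL_d(ℤ)` (given as a set of integral matrices). -/
def IsFinMatGroup (G : Set (Matrix (Fin d) (Fin d) ℤ)) : Prop :=
  G.Finite ∧ (1 : Matrix (Fin d) (Fin d) ℤ) ∈ G ∧ (∀ g ∈ G, IsUnimodular g) ∧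
    (∀ g ∈ G, ∀ h ∈ G, g * h ∈ G) ∧ ∀ g ∈ G, g⁻¹ ∈ G

/-- The space of invariant forms `F(G)` of `G ≤ GL_d(ℤ)`. -/
def FG (G : Set (Matrix (Fin d) (Fin d) ℤ)) : Set (Md d) :=
  {Q | Q.IsSymm ∧ ∀ g ∈ G, conjQ g Q = Q}

/-- The Bravais group `B(G)`: the pointwise stabilizer of `F(G)` in `GL_d(ℤ)`. -/
def BG (G : Set (Matrix (Fin d) (Fin d) ℤ)) : Set (Matrix (Fin d) (Fin d) ℤ) :=
  {g | IsUnimodular g ∧ ∀ Q ∈ FG G, conjQ g Q = Q}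

/-- The normalizer `N(B(G))` of the Bravais group in `GL_d(ℤ)`. -/
def NBG (G : Set (Matrix (Fin d) (Fin d) ℤ)) : Set (Matrix (Fin d) (Fin d) ℤ) :=
  {n | IsUnimodular n ∧ ∀ b : Matrix (Fin d) (Fin d) ℤ, b ∈ BG G ↔ n⁻¹ * b * n ∈ BG G}

/-- The inhomogeneous minimum `μ(Q) = sup_x inf_{v ∈ ℤ^d} Q[x - v]`. -/
def InhomMin (Q : Md d) : ℝ :=
  ⨆ x : Fin d → ℝ, ⨅ v : Fin d → ℤ, qf Q (x - intVec v)

/-- The bilinear form `(x, y) = xᵗ Q y` associated to `Q`. -/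
def bip (Q : Md d) (x y : Fin d → ℝ) : ℝ := x ⬝ᵥ Q.mulVec y

/-- `F` is a facet of the subdivision `D`: a `(d-1)`-dimensional cell, the intersection of
two adjacent `d`-dimensional cells. -/
def IsFacetOfSubdiv (D : Set (Set (Fin d → ℝ))) (F : Set (Fin d → ℝ)) : Prop :=
  F ∈ D ∧ sdim F = d - 1 ∧
    ∃ P ∈ D, ∃ P' ∈ D, sdim P = d ∧ sdim P' = d ∧ P ≠ P' ∧ F = P ∩ P'

/-- The linear subspace `U` of forms satisfying all equalities of the secondary cone of `D`. -/
def UD (Λ : Set (Fin d → ℝ)) (D : Set (Set (Fin d → ℝ))) : Set (Md d) :=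
  {X | X.IsSymm ∧ condA Λ D X}

/-- `ND` assigns to each facet `F` of `D` the form `N_{D,F}`: the unit-norm form in `U`
such that the projection onto `U` of every form `N_{V∪{w},w'}` attached to `F` is a
positive multiple of it. -/
def IsNDassign (Λ : Set (Fin d → ℝ)) (D : Set (Set (Fin d → ℝ)))
    (ND : Set (Fin d → ℝ) → Md d) : Prop :=
  ∀ F, IsFacetOfSubdiv D F → ND F ∈ UD Λ D ∧ minner (ND F) (ND F) = 1 ∧
    ∀ P ∈ D, ∀ P' ∈ D, sdim P = d → sdim P' = d → P ≠ P' → F = P ∩ P' →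
      ∀ V : Finset (Fin d → ℝ), (↑V : Set (Fin d → ℝ)) ⊆ Λ ∩ F → AffIndep V → V.card = d →
        ∀ w ∈ (Λ ∩ P) \ F, ∀ w' ∈ (Λ ∩ P') \ F,
          ∀ α : (Fin d → ℝ) → ℝ, IsAffComb (finsert w V) α w' →
            ∃ β : ℝ, 0 < β ∧ ∀ X ∈ UD Λ D,
              minner (Nform (finsert w V) α w') X = β * minner (ND F) X

/-- The set `R_F` of facets of `D` whose form `N_{D,F'}` projects onto `T` to a positive
multiple of `NF`. -/
def RFset (Λ : Set (Fin d → ℝ)) (D : Set (Set (Fin d → ℝ)))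
    (ND : Set (Fin d → ℝ) → Md d) (T : Set (Md d)) (NF : Md d) :
    Set (Set (Fin d → ℝ)) :=
  {F | IsFacetOfSubdiv D F ∧ ∃ γ : ℝ, 0 < γ ∧ ∀ X ∈ T, minner (ND F) X = γ * minner NF X}

/-- The chain relation on the facets of `R_F`: connected by a chain of adjacent
`d`-dimensional cells of `D`. -/
def FlipRel (D RFs : Set (Set (Fin d → ℝ))) (F1 F2 : Set (Fin d → ℝ)) : Prop :=
  ∃ (n : ℕ) (Fch : Fin (n + 1) → Set (Fin d → ℝ)) (Pch : Fin (n + 2) → Set (Fin d → ℝ)),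
    Fch 0 = F1 ∧ Fch (Fin.last n) = F2 ∧ (∀ i, Fch i ∈ RFs) ∧
    ∀ i : Fin (n + 1), Pch i.castSucc ∈ D ∧ Pch i.succ ∈ D ∧
      sdim (Pch i.castSucc) = d ∧ sdim (Pch i.succ) = d ∧
      Fch i = Pch i.castSucc ∩ Pch i.succ

/-- `C` is an equivalence class of the chain relation on `RFs`. -/
def IsEqClass (D RFs C : Set (Set (Fin d → ℝ))) : Prop :=
  C ⊆ RFs ∧ C.Nonempty ∧ ∀ F1 ∈ C, ∀ F2 ∈ RFs, (FlipRel D RFs F1 F2 ↔ F2 ∈ C)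

/-- The vertex set `V_C` of an equivalence class `C`: all vertices of `d`-dimensional
cells of `D` having a facet in `C`. -/
def VCset (Λ : Set (Fin d → ℝ)) (D C : Set (Set (Fin d → ℝ))) : Set (Fin d → ℝ) :=
  {x | ∃ P ∈ D, sdim P = d ∧ (∃ F ∈ C, IsFaceOf F P) ∧ x ∈ Λ ∩ P}

/-- A lower facet of a set in `ℝ^{d+1}`: a facet whose outer normal has negative last
coordinate. -/
def IsLowerFacet (S F : Set (Fin (d + 1) → ℝ)) : Prop :=
  ∃ (a : Fin (d + 1) → ℝ) (b : ℝ), (∀ x ∈ S, a ⬝ᵥ x ≤ b) ∧ F = {x ∈ S | a ⬝ᵥ x = b} ∧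
    Module.finrank ℝ ↥(vectorSpan ℝ F) = d ∧ a (Fin.last d) < 0

/-- An upper facet of a set in `ℝ^{d+1}`: a facet whose outer normal has positive last
coordinate. -/
def IsUpperFacet (S F : Set (Fin (d + 1) → ℝ)) : Prop :=
  ∃ (a : Fin (d + 1) → ℝ) (b : ℝ), (∀ x ∈ S, a ⬝ᵥ x ≤ b) ∧ F = {x ∈ S | a ⬝ᵥ x = b} ∧
    Module.finrank ℝ ↥(vectorSpan ℝ F) = d ∧ 0 < a (Fin.last d)

/-- The `(d+1) × (d+1)` matrix `BR_L(Q)` of a simplex `L = conv{0, v₁, …, v_d}`. -/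
def BRmat (Q : Md d) (v : Fin d → (Fin d → ℝ)) :
    Matrix (Fin (d + 1)) (Fin (d + 1)) ℝ :=
  Matrix.of fun i j =>
    if hi : i = 0 then
      (if hj : j = 0 then 4 else bip Q (v (j.pred hj)) (v (j.pred hj)))
    else if hj : j = 0 then bip Q (v (i.pred hi)) (v (i.pred hi))
    else bip Q (v (i.pred hi)) (v (j.pred hj))

/-- Two Delone polytopes are equivalent with respect to `Q`: one is obtained from the
other by an automorphism of `Q` followed by an integral translation. -/
def EquivPolyQ (Q : Md d) (P P' : Set (Fin d → ℝ)) : Prop :=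
  ∃ U : Matrix (Fin d) (Fin d) ℤ, IsUnimodular U ∧ conjQ U Q = Q ∧
    ∃ t : Fin d → ℤ, P = (fun x => intVec t + (rmat U).mulVec x) '' P'


section Aux
variable {Q : Md d}


lemma qf_eq_bip (x : Fin d → ℝ) : qf Q x = bip Q x x := rfl

lemma bip_add_right (x y z : Fin d → ℝ) : bip Q x (y + z) = bip Q x y + bip Q x z := by
  simp [bip, Matrix.mulVec_add, dotProduct_add]

lemma bip_add_left (x y z : Fin d → ℝ) : bip Q (x + y) z = bip Q x z + bip Q y z := by
  simp [bip, add_dotProduct]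

lemma bip_smul_right (t : ℝ) (x y : Fin d → ℝ) : bip Q x (t • y) = t * bip Q x y := by
  simp [bip, Matrix.mulVec_smul, dotProduct_smul, smul_eq_mul]

lemma bip_smul_left (t : ℝ) (x y : Fin d → ℝ) : bip Q (t • x) y = t * bip Q x y := by
  simp [bip, smul_dotProduct, smul_eq_mul]

lemma bip_neg_right (x y : Fin d → ℝ) : bip Q x (-y) = - bip Q x y := by
  simpa using bip_smul_right (-1) x y

lemma bip_sub_right (x y z : Fin d → ℝ) : bip Q x (y - z) = bip Q x y - bip Q x z := by
  rw [sub_eq_add_neg, bip_add_right, bip_neg_right]; ring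

lemma bip_neg_left (x y : Fin d → ℝ) : bip Q (-x) y = - bip Q x y := by
  simpa using bip_smul_left (-1) x y

lemma bip_sub_left (x y z : Fin d → ℝ) : bip Q (x - y) z = bip Q x z - bip Q y z := by
  rw [sub_eq_add_neg, bip_add_left, bip_neg_left]; ring

lemma bip_symm (hQ : Qᵀ = Q) (x y : Fin d → ℝ) : bip Q x y = bip Q y x := by
  rw [bip, dotProduct_mulVec, ← hQ, vecMul_transpose, hQ, dotProduct_comm, bip]

lemma bip_sum_right {ι : Type*} (s : Finset ι) (x : Fin d → ℝ) (g : ι → (Fin d → ℝ)) :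
    bip Q x (∑ j ∈ s, g j) = ∑ j ∈ s, bip Q x (g j) := by
  classical
  induction s using Finset.induction_on with
  | empty => simp [bip]
  | @insert a s ha ih => rw [Finset.sum_insert ha, bip_add_right, ih, Finset.sum_insert ha]

lemma bip_sum_left {ι : Type*} (s : Finset ι) (g : ι → (Fin d → ℝ)) (x : Fin d → ℝ) :
    bip Q (∑ j ∈ s, g j) x = ∑ j ∈ s, bip Q (g j) x := by
  classical
  induction s using Finset.induction_on with
  | empty => simp [bip]
  | @insert a s ha ih => rw [Finset.sum_insert ha, bip_add_left, ih, Finset.sum_insert ha]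

lemma qf_add (hQ : Qᵀ = Q) (x y : Fin d → ℝ) :
    qf Q (x + y) = qf Q x + 2 * bip Q x y + qf Q y := by
  rw [qf_eq_bip, bip_add_left, bip_add_right, bip_add_right, bip_symm hQ y x]
  rw [qf_eq_bip, qf_eq_bip]; ring

lemma qf_sub (hQ : Qᵀ = Q) (x y : Fin d → ℝ) :
    qf Q (x - y) = qf Q x - 2 * bip Q x y + qf Q y := by
  rw [qf_eq_bip, bip_sub_left, bip_sub_right, bip_sub_right, bip_symm hQ y x]
  rw [qf_eq_bip, qf_eq_bip]; ring

lemma qf_smul (t : ℝ) (x : Fin d → ℝ) : qf Q (t • x) = t^2 * qf Q x := by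
  rw [qf_eq_bip, bip_smul_left, bip_smul_right, qf_eq_bip]; ring

lemma qf_nonneg (hQ : Q.PosSemidef) (x : Fin d → ℝ) : 0 ≤ qf Q x := by
  simpa [qf] using hQ.dotProduct_mulVec_nonneg x

lemma qf_pos (hQ : Q.PosDef) {x : Fin d → ℝ} (hx : x ≠ 0) : 0 < qf Q x := by
  simpa [qf] using hQ.dotProduct_mulVec_pos hx

lemma transpose_eq_of_posdef (hQ : Q.PosDef) : Qᵀ = Q := by
  have := hQ.1
  rwa [Matrix.IsHermitian, Matrix.conjTranspose_eq_transpose_of_trivial] at this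

lemma qf_eq_zero_iff (hQ : Q.PosDef) {x : Fin d → ℝ} : qf Q x = 0 ↔ x = 0 := by
  constructor
  · intro h; by_contra hx; exact absurd h (ne_of_gt (qf_pos hQ hx))
  · rintro rfl; simp [qf]

lemma bip_sq_le (hQ : Q.PosDef) (x y : Fin d → ℝ) :
    (bip Q x y)^2 ≤ qf Q x * qf Q y := by
  have hT := transpose_eq_of_posdef hQ
  rcases eq_or_ne x 0 with rfl | hx
  · simp [bip, qf]
  · have hx' : 0 < qf Q x := qf_pos hQ hx
    have h := qf_nonneg hQ.posSemidef ((-(bip Q x y / qf Q x)) • x + y)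
    rw [qf_add hT, qf_smul, bip_smul_left] at h
    have hne : qf Q x ≠ 0 := ne_of_gt hx'
    have hexp : (-(bip Q x y / qf Q x)) ^ 2 * qf Q x + 2 * (-(bip Q x y / qf Q x) * bip Q x y)
        = - (bip Q x y)^2 / qf Q x := by
      field_simp; ring
    rw [hexp] at h
    rw [neg_div] at h
    have : (bip Q x y)^2 / qf Q x ≤ qf Q y := by linarith
    calc (bip Q x y)^2 = (bip Q x y)^2 / qf Q x * qf Q x := by field_simp
    _ ≤ qf Q y * qf Q x := mul_le_mul_of_nonneg_right this (le_of_lt hx')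
    _ = qf Q x * qf Q y := mul_comm _ _


end Aux

section Aux2
variable {Q : Md d}

lemma intVec_add (u v : Fin d → ℤ) : intVec (u + v) = intVec u + intVec v := by
  funext i; simp only [intVec, Pi.add_apply]; push_cast; ring

lemma qf_neg (x : Fin d → ℝ) : qf Q (-x) = qf Q x := by
  have h := qf_smul (Q := Q) (-1) x
  rw [neg_one_smul] at h
  rw [h]; ring

lemma continuous_qf : Continuous (qf Q) := by
  have h : qf Q = fun x => ∑ i, x i * ∑ j, Q i j * x j := by
    funext x; simp [qf, dotProduct, Matrix.mulVec]
  rw [h]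
  continuity

/-- lower bound for positive definite forms -/
lemma posdef_lower_bound (hQ : Q.PosDef) : ∃ ε : ℝ, 0 < ε ∧ ∀ y, ε * ‖y‖^2 ≤ qf Q y := by
  rcases Nat.eq_zero_or_pos d with hd | hd
  · refine ⟨1, zero_lt_one, fun y => ?_⟩
    subst hd
    have h0 : y = 0 := Subsingleton.elim _ _
    subst h0
    rw [norm_zero]
    simp [qf]
  · have : Nontrivial (Fin d → ℝ) := by
      have : Nonempty (Fin d) := ⟨⟨0, hd⟩⟩
      infer_instance
    have hne : (Metric.sphere (0 : Fin d → ℝ) 1).Nonempty :=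
      NormedSpace.sphere_nonempty.2 zero_le_one
    have hcpt : IsCompact (Metric.sphere (0 : Fin d → ℝ) 1) := isCompact_sphere _ _
    obtain ⟨y₀, hy₀S, hy₀min⟩ := hcpt.exists_isMinOn hne (continuous_qf (Q := Q)).continuousOn
    have hy₀norm : ‖y₀‖ = 1 := by simpa using hy₀S
    have hy₀ne : y₀ ≠ 0 := by intro h; rw [h] at hy₀norm; simp at hy₀norm
    refine ⟨qf Q y₀, qf_pos hQ hy₀ne, fun y => ?_⟩
    rcases eq_or_ne y 0 with rfl | hy
    · simp [qf, Matrix.mulVec, dotProduct]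
    · have hny : 0 < ‖y‖ := norm_pos_iff.2 hy
      set u : Fin d → ℝ := ‖y‖⁻¹ • y with hu
      have hunorm : ‖u‖ = 1 := norm_smul_inv_norm hy
      have huS : u ∈ Metric.sphere (0 : Fin d → ℝ) 1 := by simpa using hunorm
      have h1 : qf Q y₀ ≤ qf Q u := hy₀min huS
      have hy' : y = ‖y‖ • u := by
        rw [hu, smul_smul, mul_inv_cancel₀ (ne_of_gt hny), one_smul]
      have h2 : qf Q y = ‖y‖^2 * qf Q u := by
        calc qf Q y = qf Q (‖y‖ • u) := by rw [← hy']
        _ = ‖y‖^2 * qf Q u := qf_smul _ _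
      rw [h2]
      have := mul_le_mul_of_nonneg_left h1 (le_of_lt (pow_pos hny 2))
      linarith [this]

lemma qf_le_norm_sq (z : Fin d → ℝ) :
    qf Q z ≤ (∑ i, ∑ j, |Q i j|) * ‖z‖^2 := by
  have hexp : qf Q z = ∑ i, ∑ j, z i * (Q i j * z j) := by
    simp [qf, Matrix.mulVec, dotProduct, Finset.mul_sum]
  rw [hexp, Finset.sum_mul]
  refine Finset.sum_le_sum fun i _ => ?_
  rw [Finset.sum_mul]
  refine Finset.sum_le_sum fun j _ => ?_
  have hzi : |z i| ≤ ‖z‖ := by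
    have := norm_le_pi_norm z i; simpa [Real.norm_eq_abs] using this
  have hzj : |z j| ≤ ‖z‖ := by
    have := norm_le_pi_norm z j; simpa [Real.norm_eq_abs] using this
  have hnn : (0:ℝ) ≤ ‖z‖ := norm_nonneg _
  calc z i * (Q i j * z j) ≤ |z i * (Q i j * z j)| := le_abs_self _
  _ = |Q i j| * (|z i| * |z j|) := by rw [abs_mul, abs_mul]; ring
  _ ≤ |Q i j| * (‖z‖ * ‖z‖) := by
      apply mul_le_mul_of_nonneg_left _ (abs_nonneg _)
      exact mul_le_mul hzi hzj (abs_nonneg _) hnn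
  _ = |Q i j| * ‖z‖^2 := by ring

/-- finiteness of lattice points in a sublevel set -/
lemma finite_sublevel (hQ : Q.PosDef) (x : Fin d → ℝ) (B : ℝ) :
    {v : Fin d → ℤ | qf Q (x - intVec v) ≤ B}.Finite := by
  obtain ⟨ε, hε, hbd⟩ := posdef_lower_bound hQ
  set R : ℝ := ‖x‖ + Real.sqrt (B / ε) with hR
  have key : ∀ v ∈ {v : Fin d → ℤ | qf Q (x - intVec v) ≤ B}, ∀ i, v i ∈ Set.Icc ⌈-R⌉ ⌊R⌋ := by
    intro v hv i
    have h1 : ε * ‖x - intVec v‖^2 ≤ B := le_trans (hbd _) hv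
    have h2 : ‖x - intVec v‖^2 ≤ B / ε := by
      rw [le_div_iff₀ hε]; linarith
    have h3 : ‖x - intVec v‖ ≤ Real.sqrt (B / ε) := by
      have := Real.sqrt_le_sqrt h2
      rwa [Real.sqrt_sq (norm_nonneg _)] at this
    have h4 : ‖intVec v‖ ≤ R := by
      have htri : ‖intVec v‖ ≤ ‖x‖ + ‖x - intVec v‖ := by
        calc ‖intVec v‖ = ‖x - (x - intVec v)‖ := by congr 1; abel
        _ ≤ ‖x‖ + ‖x - intVec v‖ := norm_sub_le _ _
      rw [hR]; linarith
    have h5 : |(v i : ℝ)| ≤ R := by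
      have := norm_le_pi_norm (intVec v) i
      simp only [intVec, Real.norm_eq_abs] at this
      linarith
    rw [abs_le] at h5
    constructor
    · exact_mod_cast Int.ceil_le.2 (by exact_mod_cast h5.1)
    · exact_mod_cast Int.le_floor.2 (by exact_mod_cast h5.2)
  have hfin : (Set.pi Set.univ (fun _ : Fin d => (Set.Icc (⌈-R⌉) (⌊R⌋)))).Finite :=
    Set.Finite.pi fun i => Set.finite_Icc _ _
  exact hfin.subset fun v hv => by
    rw [Set.mem_pi]; intro i _; exact key v hv i

/-- the minimum over the lattice is attained -/
lemma exists_nearest (hQ : Q.PosDef) (x : Fin d → ℝ) :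
    ∃ v₀ : Fin d → ℤ, ∀ v, qf Q (x - intVec v₀) ≤ qf Q (x - intVec v) := by
  set T := {v : Fin d → ℤ | qf Q (x - intVec v) ≤ qf Q (x - intVec 0)} with hT
  have hfin : T.Finite := finite_sublevel hQ x _
  have hne2 : T.Nonempty := ⟨0, show qf Q (x - intVec 0) ≤ qf Q (x - intVec 0) from le_refl _⟩
  obtain ⟨v₀, hv₀T, hmin⟩ := Set.exists_min_image T (fun v => qf Q (x - intVec v)) hfin hne2
  refine ⟨v₀, fun v => ?_⟩
  by_cases hv : v ∈ T
  · exact hmin v hv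
  · have h1 : qf Q (x - intVec v₀) ≤ qf Q (x - intVec 0) := hv₀T
    have h2 : qf Q (x - intVec 0) ≤ qf Q (x - intVec v) := le_of_not_ge hv
    linarith

/-- the periodic minimum function -/
def fm (Q : Md d) (x : Fin d → ℝ) : ℝ := ⨅ v : Fin d → ℤ, qf Q (x - intVec v)

lemma inhomMin_eq : InhomMin Q = ⨆ x, fm Q x := rfl

lemma bddBelow_fm (hQ : Q.PosDef) (x : Fin d → ℝ) :
    BddBelow (Set.range fun v : Fin d → ℤ => qf Q (x - intVec v)) := by
  refine ⟨0, ?_⟩; rintro r ⟨v, rfl⟩; exact qf_nonneg hQ.posSemidef _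

lemma fm_le (hQ : Q.PosDef) (x : Fin d → ℝ) (v : Fin d → ℤ) :
    fm Q x ≤ qf Q (x - intVec v) := ciInf_le (bddBelow_fm hQ x) v

lemma fm_nonneg (hQ : Q.PosDef) (x : Fin d → ℝ) : 0 ≤ fm Q x := by
  apply le_ciInf; intro v; exact qf_nonneg hQ.posSemidef _

lemma fm_eq_nearest (hQ : Q.PosDef) (x : Fin d → ℝ) :
    ∃ v₀ : Fin d → ℤ, fm Q x = qf Q (x - intVec v₀) ∧
      ∀ v, qf Q (x - intVec v₀) ≤ qf Q (x - intVec v) := by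
  obtain ⟨v₀, hv₀⟩ := exists_nearest hQ x
  exact ⟨v₀, le_antisymm (fm_le hQ x v₀) (le_ciInf hv₀), hv₀⟩

lemma fm_periodic (hQ : Q.PosDef) (x : Fin d → ℝ) (u : Fin d → ℤ) :
    fm Q (x + intVec u) = fm Q x := by
  apply le_antisymm
  · apply le_ciInf; intro v
    have := fm_le hQ (x + intVec u) (v + u)
    calc fm Q (x + intVec u) ≤ qf Q (x + intVec u - intVec (v + u)) := this
    _ = qf Q (x - intVec v) := by rw [intVec_add]; congr 1; abel
  · apply le_ciInf; intro v
    have := fm_le hQ x (v - u)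
    calc fm Q x ≤ qf Q (x - intVec (v - u)) := this
    _ = qf Q (x + intVec u - intVec v) := by
        have hsub : intVec (v - u) = intVec v - intVec u := by
          funext i; simp only [intVec, Pi.sub_apply]; push_cast; ring
        rw [hsub]; congr 1; abel

lemma sqrt_qf_add_le (hQ : Q.PosDef) (a b : Fin d → ℝ) :
    Real.sqrt (qf Q (a + b)) ≤ Real.sqrt (qf Q a) + Real.sqrt (qf Q b) := by
  have hT := transpose_eq_of_posdef hQ
  have ha := qf_nonneg hQ.posSemidef a
  have hb := qf_nonneg hQ.posSemidef b
  have hcs : bip Q a b ≤ Real.sqrt (qf Q a) * Real.sqrt (qf Q b) := by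
    have h1 : (bip Q a b)^2 ≤ qf Q a * qf Q b := bip_sq_le hQ a b
    calc bip Q a b ≤ |bip Q a b| := le_abs_self _
    _ = Real.sqrt ((bip Q a b)^2) := (Real.sqrt_sq_eq_abs _).symm
    _ ≤ Real.sqrt (qf Q a * qf Q b) := Real.sqrt_le_sqrt h1
    _ = Real.sqrt (qf Q a) * Real.sqrt (qf Q b) := Real.sqrt_mul ha _
  have hq : qf Q (a + b) ≤ (Real.sqrt (qf Q a) + Real.sqrt (qf Q b))^2 := by
    rw [qf_add hT]
    have hsa : Real.sqrt (qf Q a)^2 = qf Q a := Real.sq_sqrt ha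
    have hsb : Real.sqrt (qf Q b)^2 = qf Q b := Real.sq_sqrt hb
    nlinarith [hcs, hsa, hsb]
  calc Real.sqrt (qf Q (a+b)) ≤ Real.sqrt ((Real.sqrt (qf Q a) + Real.sqrt (qf Q b))^2) :=
        Real.sqrt_le_sqrt hq
  _ = |Real.sqrt (qf Q a) + Real.sqrt (qf Q b)| := Real.sqrt_sq_eq_abs _
  _ = _ := abs_of_nonneg (by positivity)

lemma continuous_fm (hQ : Q.PosDef) : Continuous (fm Q) := by
  set C : ℝ := Real.sqrt (∑ i, ∑ j, |Q i j|) with hC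
  have hCnn : 0 ≤ C := Real.sqrt_nonneg _
  have hsum_nn : 0 ≤ ∑ i, ∑ j : Fin d, |Q i j| :=
    Finset.sum_nonneg fun i _ => Finset.sum_nonneg fun j _ => abs_nonneg _
  have hqfC : ∀ z : Fin d → ℝ, Real.sqrt (qf Q z) ≤ C * ‖z‖ := by
    intro z
    have h1 : qf Q z ≤ (∑ i, ∑ j, |Q i j|) * ‖z‖^2 := qf_le_norm_sq z
    calc Real.sqrt (qf Q z) ≤ Real.sqrt ((∑ i, ∑ j, |Q i j|) * ‖z‖^2) := Real.sqrt_le_sqrt h1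
    _ = C * Real.sqrt (‖z‖^2) := Real.sqrt_mul hsum_nn _
    _ = C * ‖z‖ := by rw [Real.sqrt_sq (norm_nonneg _)]
  have hkey : ∀ x y : Fin d → ℝ,
      Real.sqrt (fm Q x) ≤ C * ‖x - y‖ + Real.sqrt (fm Q y) := by
    intro x y
    obtain ⟨v₀, hv₀, _⟩ := fm_eq_nearest hQ y
    have h1 : fm Q x ≤ qf Q (x - intVec v₀) := fm_le hQ x v₀
    have h2 : Real.sqrt (qf Q (x - intVec v₀)) ≤
        Real.sqrt (qf Q (x - y)) + Real.sqrt (qf Q (y - intVec v₀)) := by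
      have := sqrt_qf_add_le hQ (x - y) (y - intVec v₀)
      have heq : x - y + (y - intVec v₀) = x - intVec v₀ := by abel
      rwa [heq] at this
    have h3 : Real.sqrt (fm Q x) ≤ Real.sqrt (qf Q (x - intVec v₀)) :=
      Real.sqrt_le_sqrt h1
    have h4 : Real.sqrt (qf Q (y - intVec v₀)) = Real.sqrt (fm Q y) := by rw [hv₀]
    have h5 : Real.sqrt (qf Q (x - y)) ≤ C * ‖x - y‖ := hqfC _
    linarith
  have hlip : LipschitzWith (Real.toNNReal C) (fun x => Real.sqrt (fm Q x)) := by
    apply LipschitzWith.of_dist_le_mul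
    intro x y
    rw [Real.dist_eq, dist_eq_norm]
    rw [abs_le]
    constructor
    · have := hkey y x
      have hnorm : ‖y - x‖ = ‖x - y‖ := norm_sub_rev _ _
      rw [hnorm] at this
      have hcoe : (Real.toNNReal C : ℝ) = C := Real.coe_toNNReal C hCnn
      rw [hcoe]; linarith
    · have := hkey x y
      have hcoe : (Real.toNNReal C : ℝ) = C := Real.coe_toNNReal C hCnn
      rw [hcoe]; linarith
  have hgc : Continuous (fun x => Real.sqrt (fm Q x)) := hlip.continuous
  have heq2 : fm Q = fun x => (Real.sqrt (fm Q x))^2 := by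
    funext x; rw [Real.sq_sqrt (fm_nonneg hQ x)]
  rw [heq2]
  exact hgc.pow 2

/-- existence of a global maximizer of `fm` -/
lemma exists_fm_max (hQ : Q.PosDef) : ∃ xs : Fin d → ℝ, ∀ x, fm Q x ≤ fm Q xs := by
  set K : Set (Fin d → ℝ) := Set.Icc 0 1 with hK
  have hcpt : IsCompact K := isCompact_Icc
  have hne : K.Nonempty := ⟨0, Set.left_mem_Icc.2 zero_le_one⟩
  obtain ⟨xs, hxsK, hxs⟩ := hcpt.exists_isMaxOn hne (continuous_fm hQ).continuousOn
  refine ⟨xs, fun x => ?_⟩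
  set v : Fin d → ℤ := fun i => ⌊x i⌋ with hv
  have hmem : x - intVec v ∈ K := by
    rw [hK, Set.mem_Icc]
    constructor <;> (rw [Pi.le_def]; intro i)
    · have h := Int.floor_le (x i)
      simp only [Pi.zero_apply, Pi.sub_apply, intVec, hv]
      linarith
    · have h := Int.lt_floor_add_one (x i)
      simp only [Pi.one_apply, Pi.sub_apply, intVec, hv]
      linarith
  have hp := fm_periodic hQ (x - intVec v) v
  have heq : x - intVec v + intVec v = x := by abel
  rw [heq] at hp
  rw [hp]
  exact hxs hmem

end Aux2


section Aux3
variable {Q : Md d}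

/-- bilinear form as a bundled bilinear map -/
def bipL (Q : Md d) : (Fin d → ℝ) →ₗ[ℝ] (Fin d → ℝ) →ₗ[ℝ] ℝ :=
  LinearMap.mk₂ ℝ (bip Q) bip_add_left bip_smul_left bip_add_right bip_smul_right

/-- a nonzero Q-orthogonal vector to a proper subspace -/
lemma exists_orth (hQ : Q.PosDef) {W : Submodule ℝ (Fin d → ℝ)} (hW : W ≠ ⊤) :
    ∃ u : Fin d → ℝ, u ≠ 0 ∧ ∀ w ∈ W, bip Q u w = 0 := by
  classical
  set φ : (Fin d → ℝ) →ₗ[ℝ] (W →ₗ[ℝ] ℝ) := (bipL Q).compl₂ W.subtype with hφ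
  have hrank := LinearMap.finrank_range_add_finrank_ker φ
  have hdim : Module.finrank ℝ (Fin d → ℝ) = d := by
    rw [Module.finrank_fintype_fun_eq_card, Fintype.card_fin]
  have hWlt : Module.finrank ℝ W < d := by
    have := Submodule.finrank_lt (K := ℝ) (V := Fin d → ℝ) hW
    rwa [hdim] at this
  have hcodim : Module.finrank ℝ (W →ₗ[ℝ] ℝ) < d := by
    rw [Module.finrank_linearMap, Module.finrank_self, mul_one]
    exact hWlt
  have hrange : Module.finrank ℝ (LinearMap.range φ) < d :=
    lt_of_le_of_lt (Submodule.finrank_le _) hcodim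
  have hker : LinearMap.ker φ ≠ ⊥ := by
    intro hbot
    rw [hbot, finrank_bot, add_zero, hdim] at hrank
    omega
  obtain ⟨u, huk, hune⟩ := Submodule.exists_mem_ne_zero_of_ne_bot hker
  refine ⟨u, hune, fun w hw => ?_⟩
  have : φ u = 0 := huk
  have := congrArg (fun g => g ⟨w, hw⟩) this
  simpa [hφ, bipL] using this

set_option maxHeartbeats 1600000 in
/-- At a global maximizer of `fm`, the set of nearest lattice points affinely
spans the whole space. -/
lemma exists_good_cell (hQ : Q.PosDef) (xs : Fin d → ℝ)
    (hmax : ∀ x, fm Q x ≤ fm Q xs) :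
    ∃ S : Set (Fin d → ℝ), S ⊆ latticeZ d ∧ S.Nonempty ∧
      (∀ v ∈ S, qf Q (xs - v) = fm Q xs) ∧
      (∀ v ∈ latticeZ d, v ∉ S → fm Q xs < qf Q (xs - v)) ∧
      vectorSpan ℝ S = ⊤ := by
  classical
  have hT := transpose_eq_of_posdef hQ
  set r2 : ℝ := fm Q xs with hr2def
  set S : Set (Fin d → ℝ) := {y | y ∈ latticeZ d ∧ qf Q (xs - y) = r2} with hSdef
  obtain ⟨v₀, hv₀eq, hv₀min⟩ := fm_eq_nearest hQ xs
  have hv₀S : intVec v₀ ∈ S := ⟨⟨v₀, rfl⟩, hv₀eq.symm⟩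
  have hSlat : S ⊆ latticeZ d := fun y hy => hy.1
  have hSne : S.Nonempty := ⟨intVec v₀, hv₀S⟩
  have hsphere : ∀ v ∈ S, qf Q (xs - v) = r2 := fun v hv => hv.2
  have hlow : ∀ v : Fin d → ℤ, r2 ≤ qf Q (xs - intVec v) := fun v => fm_le hQ xs v
  have hout : ∀ v ∈ latticeZ d, v ∉ S → r2 < qf Q (xs - v) := by
    rintro v ⟨vz, rfl⟩ hvS
    rcases lt_or_eq_of_le (hlow vz) with h | h
    · exact h
    · exact absurd ⟨⟨vz, rfl⟩, h.symm⟩ hvS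
  refine ⟨S, hSlat, hSne, hsphere, hout, ?_⟩
  by_contra hWne
  obtain ⟨u, hu0, horth⟩ := exists_orth hQ hWne
  -- WLOG the component along xs - intVec v₀ is nonnegative
  have key : ∀ u' : Fin d → ℝ, u' ≠ 0 → (∀ w ∈ vectorSpan ℝ S, bip Q u' w = 0) →
      0 ≤ bip Q (xs - intVec v₀) u' → False := by
    intro u hu0 horth ha
    set a : ℝ := bip Q (xs - intVec v₀) u with hadef
    have hP : 0 < qf Q u := qf_pos hQ hu0
    set P : ℝ := qf Q u with hPdef
    have hr2nn : 0 ≤ r2 := fm_nonneg hQ xs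
    -- for v in the sphere set, the cross term is exactly a
    have hcross : ∀ v : Fin d → ℤ, intVec v ∈ S → bip Q (xs - intVec v) u = a := by
      intro v hvS
      have hmem : intVec v₀ - intVec v ∈ vectorSpan ℝ S := by
        have := vsub_mem_vectorSpan ℝ (p₁ := intVec v₀) (p₂ := intVec v) hv₀S hvS
        simpa using this
      have h0 : bip Q u (intVec v₀ - intVec v) = 0 := horth _ hmem
      have h0' : bip Q (intVec v₀ - intVec v) u = 0 := by
        rw [bip_symm hT]; exact h0
      have hsplit : xs - intVec v = (xs - intVec v₀) + (intVec v₀ - intVec v) := by abel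
      rw [hsplit, bip_add_left, h0', hadef]; ring
    set B : ℝ := 2*(r2 + 2*|a| + 2*P + 1) with hBdef
    have hr2B : r2 ≤ B := by
      have := abs_nonneg a; nlinarith
    set T : Set (Fin d → ℤ) := {v | qf Q (xs - intVec v) ≤ B} with hTdef
    have hTfin : T.Finite := finite_sublevel hQ xs B
    have hTne : T.Nonempty := ⟨v₀, by rw [hTdef]; exact le_trans (le_of_eq hv₀eq.symm) hr2B⟩
    obtain ⟨vC, hvCT, hvCmax⟩ :=
      Set.exists_max_image T (fun v => |bip Q (xs - intVec v) u|) hTfin hTne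
    set C : ℝ := |bip Q (xs - intVec vC) u| with hCdef
    have hCnn : 0 ≤ C := abs_nonneg _
    -- the gap δ
    set T' : Set (Fin d → ℤ) := {v | qf Q (xs - intVec v) ≤ B ∧ qf Q (xs - intVec v) ≠ r2}
      with hT'def
    have hT'fin : T'.Finite := hTfin.subset fun v hv => hv.1
    have hgap : ∃ δ : ℝ, 0 < δ ∧
        ∀ v : Fin d → ℤ, qf Q (xs - intVec v) ≤ B → qf Q (xs - intVec v) ≠ r2 →
          r2 + δ ≤ qf Q (xs - intVec v) := by
      rcases Set.eq_empty_or_nonempty T' with hE | hNE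
      · refine ⟨1, zero_lt_one, fun v h1 h2 => ?_⟩
        exact absurd (show v ∈ T' from ⟨h1, h2⟩) (by rw [hE]; exact Set.notMem_empty v)
      · obtain ⟨vδ, hvδT, hvδmin⟩ :=
          Set.exists_min_image T' (fun v => qf Q (xs - intVec v)) hT'fin hNE
        refine ⟨qf Q (xs - intVec vδ) - r2, ?_, fun v h1 h2 => ?_⟩
        · have h := hvδT.2
          have := hlow vδ
          cases lt_or_eq_of_le this with
          | inl h' => linarith
          | inr h' => exact absurd h'.symm h
        · have := hvδmin v ⟨h1, h2⟩
          linarith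
    obtain ⟨δ, hδpos, hδ⟩ := hgap
    -- choose ε
    set ε : ℝ := min 1 (δ / (2*C + 2*|a| + 1)) with hεdef
    have hden : 0 < 2*C + 2*|a| + 1 := by have := abs_nonneg a; linarith
    have hεpos : 0 < ε := lt_min zero_lt_one (div_pos hδpos hden)
    have hε1 : ε ≤ 1 := min_le_left _ _
    have hεδ : ε * (2*C + 2*|a| + 1) ≤ δ := by
      have h1 : ε ≤ δ / (2*C + 2*|a| + 1) := min_le_right _ _
      calc ε * (2*C + 2*|a| + 1) ≤ (δ / (2*C + 2*|a| + 1)) * (2*C + 2*|a| + 1) :=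
            mul_le_mul_of_nonneg_right h1 (le_of_lt hden)
      _ = δ := by field_simp
    -- main estimate
    have hmain : ∀ v : Fin d → ℤ,
        r2 + 2*ε*a + ε^2*P ≤ qf Q (xs + ε • u - intVec v) := by
      intro v
      have hexp : qf Q (xs + ε • u - intVec v)
          = qf Q (xs - intVec v) + 2*ε*(bip Q (xs - intVec v) u) + ε^2*P := by
        have heq : xs + ε • u - intVec v = (xs - intVec v) + ε • u := by abel
        rw [heq, qf_add hT, bip_smul_right, qf_smul, hPdef]
        ring
      set qz : ℝ := qf Q (xs - intVec v) with hqz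
      set bz : ℝ := bip Q (xs - intVec v) u with hbz
      rw [hexp]
      by_cases hvS : qz = r2
      · have : intVec v ∈ S := ⟨⟨v, rfl⟩, hvS⟩
        have := hcross v this
        rw [← hbz] at this
        rw [this, hvS]
      · by_cases hnear : qz ≤ B
        · have h1 : r2 + δ ≤ qz := hδ v hnear hvS
          have h2 : |bz| ≤ C := hvCmax v (by rw [hTdef]; exact hnear)
          have h3 : -C ≤ bz := by have := abs_le.1 h2; linarith [this.1]
          have haabs : a ≤ |a| := le_abs_self a
          nlinarith [mul_le_mul_of_nonneg_left haabs (le_of_lt hεpos),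
            mul_le_mul_of_nonneg_left h3 (le_of_lt hεpos), hεδ, hεpos]
        · push_neg at hnear
          have hb2 : bz^2 ≤ qz * P := by
            rw [hbz, hqz, hPdef]; exact bip_sq_le hQ _ _
          have hqzpos : 0 < qz := lt_of_le_of_lt (by positivity) hnear
          have haabs : a ≤ |a| := le_abs_self a
          have habsnn : 0 ≤ |a| := abs_nonneg a
          -- AM-GM style bound: 2*ε*bz ≥ -(qz/2 + 2*ε^2*P)
          have h4 : 4*ε^2*bz^2 ≤ 4*ε^2*(qz*P) :=
            mul_le_mul_of_nonneg_left hb2 (by positivity)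
          have hamgm : -(qz/2 + 2*ε^2*P) ≤ 2*ε*bz := by
            nlinarith [sq_nonneg (qz + 2*ε*bz), h4, hqzpos]
          have hB2 : r2 + 2*|a| + 2*P + 1 < qz/2 := by
            rw [hBdef] at hnear; linarith
          have hεsq : ε^2 ≤ 1 := by nlinarith [hε1, hεpos.le]
          have hεP : ε^2*P ≤ P := by nlinarith [mul_le_mul_of_nonneg_right hεsq hP.le]
          have hεa : 2*ε*a ≤ 2*|a| := by
            rcases le_or_gt 0 a with h | h
            · have : ε*a ≤ 1*a := mul_le_mul_of_nonneg_right hε1 h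
              have : a ≤ |a| := le_abs_self a
              nlinarith
            · have h1 : 2*ε*a < 0 := by
                apply mul_neg_of_pos_of_neg (by linarith) h
              linarith
          linarith
    -- contradiction with maximality
    have hfm : r2 + 2*ε*a + ε^2*P ≤ fm Q (xs + ε • u) := le_ciInf hmain
    have hub : fm Q (xs + ε • u) ≤ r2 := hmax _
    have h1 : 0 ≤ 2*ε*a := mul_nonneg (by positivity) ha
    have h2 : 0 < ε^2*P := mul_pos (pow_pos hεpos 2) hP
    linarith
  rcases le_or_gt 0 (bip Q (xs - intVec v₀) u) with ha | ha
  · exact key u hu0 horth ha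
  · refine key (-u) (neg_ne_zero.2 hu0) (fun w hw => ?_) ?_
    · rw [bip_neg_left, horth w hw, neg_zero]
    · rw [bip_neg_right]; linarith

end Aux3


section Aux4
variable {Q : Md d}

lemma bip_le_sqrt (hQ : Q.PosDef) (a b : Fin d → ℝ) :
    bip Q a b ≤ Real.sqrt (qf Q a) * Real.sqrt (qf Q b) := by
  have ha := qf_nonneg hQ.posSemidef a
  have h1 : (bip Q a b)^2 ≤ qf Q a * qf Q b := bip_sq_le hQ a b
  calc bip Q a b ≤ |bip Q a b| := le_abs_self _
  _ = Real.sqrt ((bip Q a b)^2) := (Real.sqrt_sq_eq_abs _).symm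
  _ ≤ Real.sqrt (qf Q a * qf Q b) := Real.sqrt_le_sqrt h1
  _ = Real.sqrt (qf Q a) * Real.sqrt (qf Q b) := Real.sqrt_mul ha _

lemma qf_comb (hQ : Q.PosDef) (z w : Fin d → ℝ) {α β : ℝ}
    (hα : 0 ≤ α) (hβ : 0 ≤ β) (hs : α + β = 1) :
    qf Q (α • z + β • w) ≤ α * qf Q z + β * qf Q w := by
  have hT := transpose_eq_of_posdef hQ
  have hcs := bip_le_sqrt hQ z w
  have hz := qf_nonneg hQ.posSemidef z
  have hw := qf_nonneg hQ.posSemidef w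
  have hA : Real.sqrt (qf Q z)^2 = qf Q z := Real.sq_sqrt hz
  have hB : Real.sqrt (qf Q w)^2 = qf Q w := Real.sq_sqrt hw
  rw [qf_add hT, qf_smul, qf_smul, bip_smul_left, bip_smul_right]
  rw [← hA, ← hB]
  have hβ' : β = 1 - α := by linarith
  subst hβ'
  nlinarith [mul_nonneg (mul_nonneg hα hβ)
      (sq_nonneg (Real.sqrt (qf Q z) - Real.sqrt (qf Q w))),
    mul_nonneg (mul_nonneg hα hβ) (sub_nonneg.2 hcs)]

lemma convex_qf_ball (hQ : Q.PosDef) (c : Fin d → ℝ) (ρ : ℝ) :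
    Convex ℝ {y : Fin d → ℝ | qf Q (c - y) ≤ ρ} := by
  intro x hx y hy α β hα hβ hs
  simp only [Set.mem_setOf_eq] at hx hy ⊢
  have hrw : c - (α • x + β • y) = α • (c - x) + β • (c - y) := by
    calc c - (α • x + β • y) = (α + β) • c - (α • x + β • y) := by rw [hs, one_smul]
    _ = α • (c - x) + β • (c - y) := by rw [add_smul, smul_sub, smul_sub]; abel
  rw [hrw]
  calc qf Q (α • (c - x) + β • (c - y)) ≤ α * qf Q (c - x) + β * qf Q (c - y) :=
        qf_comb hQ _ _ hα hβ hs
  _ ≤ α * ρ + β * ρ := add_le_add (mul_le_mul_of_nonneg_left hx hα)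
        (mul_le_mul_of_nonneg_left hy hβ)
  _ = ρ := by rw [← add_mul, hs, one_mul]

/-- A lattice point in the hull of the vertex set of an empty sphere is a vertex. -/
lemma lattice_mem_hull (hQ : Q.PosDef) {S : Set (Fin d → ℝ)} {c : Fin d → ℝ} {ρ : ℝ}
    (hsph : ∀ v ∈ S, qf Q (c - v) = ρ)
    (hout : ∀ v ∈ latticeZ d, v ∉ S → ρ < qf Q (c - v))
    {x : Fin d → ℝ} (hx1 : x ∈ latticeZ d) (hx2 : x ∈ convexHull ℝ S) :
    x ∈ S ∧ qf Q (c - x) = ρ := by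
  have hsub : convexHull ℝ S ⊆ {y : Fin d → ℝ | qf Q (c - y) ≤ ρ} :=
    convexHull_min (fun v hv => le_of_eq (hsph v hv)) (convex_qf_ball hQ c ρ)
  have hle : qf Q (c - x) ≤ ρ := hsub hx2
  by_cases hxS : x ∈ S
  · exact ⟨hxS, hsph x hxS⟩
  · exact absurd hle (not_le.2 (hout x hx1 hxS))

lemma rmat_mulVec_intVec (U : Matrix (Fin d) (Fin d) ℤ) (v : Fin d → ℤ) :
    (rmat U).mulVec (intVec v) = intVec (U.mulVec v) := by
  funext i
  simp only [rmat, Matrix.mulVec, dotProduct, Matrix.map_apply, intVec]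
  push_cast
  rfl

lemma qf_rmat_conj {U : Matrix (Fin d) (Fin d) ℤ} (hU : conjQ U Q = Q) (y : Fin d → ℝ) :
    qf Q ((rmat U).mulVec y) = qf Q y := by
  set M := rmat U with hM
  calc qf Q (M.mulVec y) = (M.mulVec y) ⬝ᵥ ((Q*M).mulVec y) := by
        rw [qf, Matrix.mulVec_mulVec]
  _ = (Matrix.vecMul y Mᵀ) ⬝ᵥ ((Q*M).mulVec y) := by rw [Matrix.vecMul_transpose]
  _ = y ⬝ᵥ (Mᵀ.mulVec ((Q*M).mulVec y)) := (dotProduct_mulVec _ _ _).symm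
  _ = y ⬝ᵥ ((Mᵀ*(Q*M)).mulVec y) := by rw [Matrix.mulVec_mulVec]
  _ = y ⬝ᵥ (Q.mulVec y) := by
        rw [← mul_assoc]
        rw [show Mᵀ*Q*M = Q from hU]
  _ = qf Q y := rfl

lemma exists_int_preimage {U : Matrix (Fin d) (Fin d) ℤ} (hU : IsUnimodular U)
    (w : Fin d → ℤ) : ∃ v : Fin d → ℤ, U.mulVec v = w := by
  refine ⟨U⁻¹.mulVec w, ?_⟩
  rw [Matrix.mulVec_mulVec, Matrix.mul_nonsing_inv U hU, Matrix.one_mulVec]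

end Aux4


section Aux5
variable {Q : Md d}

lemma star_vec {ι : Type*} (x : ι → ℝ) : star x = x := funext fun i => by simp

lemma BR_entry_00 (w : Fin d → (Fin d → ℝ)) : BRmat Q w 0 0 = 4 := by
  simp [BRmat]

lemma BR_entry_0s (w : Fin d → (Fin d → ℝ)) (j : Fin d) :
    BRmat Q w 0 j.succ = bip Q (w j) (w j) := by
  simp [BRmat, Fin.succ_ne_zero]

lemma BR_entry_s0 (w : Fin d → (Fin d → ℝ)) (i : Fin d) :
    BRmat Q w i.succ 0 = bip Q (w i) (w i) := by
  simp [BRmat, Fin.succ_ne_zero]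

lemma BR_entry_ss (w : Fin d → (Fin d → ℝ)) (i j : Fin d) :
    BRmat Q w i.succ j.succ = bip Q (w i) (w j) := by
  simp [BRmat, Fin.succ_ne_zero]

lemma BR_quad (Q : Md d) (w : Fin d → (Fin d → ℝ)) (y : Fin (d+1) → ℝ) :
    y ⬝ᵥ (BRmat Q w).mulVec y
      = 4*(y 0)^2 + 2*(y 0)*(∑ j, y j.succ * bip Q (w j) (w j))
        + ∑ j, ∑ k, (y j.succ) * (y k.succ) * bip Q (w j) (w k) := by
  have h1 : y ⬝ᵥ (BRmat Q w).mulVec y = ∑ i, ∑ j, y i * (BRmat Q w i j * y j) := by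
    simp [Matrix.mulVec, dotProduct, Finset.mul_sum]
  rw [h1]
  simp only [Fin.sum_univ_succ, BR_entry_00, BR_entry_0s, BR_entry_s0, BR_entry_ss]
  rw [Finset.sum_add_distrib]
  have e1 : ∑ j : Fin d, y 0 * (bip Q (w j) (w j) * y j.succ)
      = y 0 * ∑ j, y j.succ * bip Q (w j) (w j) := by
    rw [Finset.mul_sum]; apply Finset.sum_congr rfl; intros; ring
  have e2 : ∑ i : Fin d, y i.succ * (bip Q (w i) (w i) * y 0)
      = y 0 * ∑ j, y j.succ * bip Q (w j) (w j) := by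
    rw [Finset.mul_sum]; apply Finset.sum_congr rfl; intros; ring
  have e3 : ∑ i : Fin d, ∑ j : Fin d, y i.succ * (bip Q (w i) (w j) * y j.succ)
      = ∑ j, ∑ k, (y j.succ) * (y k.succ) * bip Q (w j) (w k) := by
    apply Finset.sum_congr rfl; intro i _
    apply Finset.sum_congr rfl; intro j _; ring
  rw [e1, e2, e3]
  ring

lemma sum_bip_comb (z : Fin d → ℝ) (c' : Fin d → ℝ) (w : Fin d → (Fin d → ℝ)) :
    ∑ j, z j * bip Q c' (w j) = bip Q c' (∑ j, z j • w j) := by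
  rw [bip_sum_right]
  apply Finset.sum_congr rfl; intro j _; rw [bip_smul_right]

lemma sum_sum_bip (z : Fin d → ℝ) (w : Fin d → (Fin d → ℝ)) :
    ∑ j, ∑ k, z j * z k * bip Q (w j) (w k) = qf Q (∑ j, z j • w j) := by
  rw [qf_eq_bip, bip_sum_left]
  apply Finset.sum_congr rfl; intro j _
  rw [bip_smul_left, bip_sum_right, Finset.mul_sum]
  apply Finset.sum_congr rfl; intro k _
  rw [bip_smul_right]; ring

lemma BR_isHermitian (hT : Qᵀ = Q) (w : Fin d → (Fin d → ℝ)) :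
    (BRmat Q w).IsHermitian := by
  rw [Matrix.IsHermitian]
  ext i j
  rw [Matrix.conjTranspose_apply, star_trivial]
  unfold BRmat
  simp only [Matrix.of_apply]
  by_cases hi : i = 0 <;> by_cases hj : j = 0 <;>
    simp [hi, hj, bip_symm hT]

/-- positive semidefiniteness of `BRmat` from a circumsphere of radius at most 1 -/
lemma BR_psd_of_radius (hQ : Q.PosDef) (w : Fin d → (Fin d → ℝ)) (c' : Fin d → ℝ)
    (hr : qf Q c' ≤ 1) (hid : ∀ j, bip Q (w j) (w j) = 2 * bip Q c' (w j)) :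
    (BRmat Q w).PosSemidef := by
  have hT := transpose_eq_of_posdef hQ
  refine Matrix.PosSemidef.of_dotProduct_mulVec_nonneg (BR_isHermitian hT w) fun y => ?_
  rw [star_vec, BR_quad]
  set z : Fin d → ℝ := fun j => y j.succ with hz
  set v : Fin d → ℝ := ∑ j, z j • w j with hv
  have h1 : ∑ j, y j.succ * bip Q (w j) (w j) = 2 * bip Q c' v := by
    calc ∑ j, y j.succ * bip Q (w j) (w j) = ∑ j, z j * (2 * bip Q c' (w j)) := by
          apply Finset.sum_congr rfl; intro j _; rw [hid j]
    _ = 2 * ∑ j, z j * bip Q c' (w j) := by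
          rw [Finset.mul_sum]; apply Finset.sum_congr rfl; intros; ring
    _ = 2 * bip Q c' v := by rw [sum_bip_comb]
  have h2 : ∑ j, ∑ k, y j.succ * y k.succ * bip Q (w j) (w k) = qf Q v := sum_sum_bip z w
  rw [h1, h2]
  have ht2 : (bip Q c' v)^2 ≤ qf Q c' * qf Q v := bip_sq_le hQ c' v
  have hqv : 0 ≤ qf Q v := qf_nonneg hQ.posSemidef v
  have hqc : 0 ≤ qf Q c' := qf_nonneg hQ.posSemidef c'
  nlinarith [sq_nonneg (2*(y 0) + bip Q c' v), mul_nonneg hqv (sub_nonneg.2 hr)]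

/-- the circumradius bound from positive semidefiniteness of `BRmat` -/
lemma radius_le_one_of_BR_psd (hQ : Q.PosDef) (w : Fin d → (Fin d → ℝ))
    (hw : LinearIndependent ℝ w) (c' : Fin d → ℝ)
    (hid : ∀ j, bip Q (w j) (w j) = 2 * bip Q c' (w j))
    (hpsd : (BRmat Q w).PosSemidef) : qf Q c' ≤ 1 := by
  have hT := transpose_eq_of_posdef hQ
  rcases Nat.eq_zero_or_pos d with hd | hd
  · subst hd
    have h0 : c' = 0 := Subsingleton.elim _ _
    rw [h0]
    have : qf Q (0 : Fin 0 → ℝ) = 0 := by simp [qf]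
    rw [this]; norm_num
  · have : Nonempty (Fin d) := ⟨⟨0, hd⟩⟩
    have hcard : Fintype.card (Fin d) = Module.finrank ℝ (Fin d → ℝ) := by
      rw [Module.finrank_fintype_fun_eq_card]
    let b := basisOfLinearIndependentOfCardEqFinrank hw hcard
    have hb : ⇑b = w := coe_basisOfLinearIndependentOfCardEqFinrank hw hcard
    set z : Fin d → ℝ := fun j => b.repr c' j with hzdef
    have hvc : ∑ j, z j • w j = c' := by
      have h := b.sum_repr c'
      rw [hb] at h
      exact h
    set y : Fin (d+1) → ℝ := Fin.cons (-(qf Q c')/2) z with hy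
    have h := hpsd.dotProduct_mulVec_nonneg y
    rw [star_vec, BR_quad] at h
    have hy0 : y 0 = -(qf Q c')/2 := by rw [hy]; exact Fin.cons_zero _ _
    have hys : ∀ j : Fin d, y j.succ = z j := fun j => by rw [hy]; exact Fin.cons_succ _ _ _
    have h1 : ∑ j, y j.succ * bip Q (w j) (w j) = 2 * qf Q c' := by
      calc ∑ j, y j.succ * bip Q (w j) (w j) = ∑ j, z j * (2 * bip Q c' (w j)) := by
            apply Finset.sum_congr rfl; intro j _; rw [hys j, hid j]
      _ = 2 * ∑ j, z j * bip Q c' (w j) := by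
            rw [Finset.mul_sum]; apply Finset.sum_congr rfl; intros; ring
      _ = 2 * bip Q c' (∑ j, z j • w j) := by rw [sum_bip_comb]
      _ = 2 * qf Q c' := by rw [hvc, ← qf_eq_bip]
    have h2 : ∑ j, ∑ k, y j.succ * y k.succ * bip Q (w j) (w k) = qf Q c' := by
      calc ∑ j, ∑ k, y j.succ * y k.succ * bip Q (w j) (w k)
          = ∑ j, ∑ k, z j * z k * bip Q (w j) (w k) := by
            apply Finset.sum_congr rfl; intro j _
            apply Finset.sum_congr rfl; intro k _
            rw [hys j, hys k]
      _ = qf Q (∑ j, z j • w j) := sum_sum_bip z w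
      _ = qf Q c' := by rw [hvc]
    rw [h1, h2, hy0] at h
    have hqc : 0 ≤ qf Q c' := qf_nonneg hQ.posSemidef c'
    nlinarith [h, hqc]

lemma blockDiagonal_quad {n k : ℕ} (M : Fin n → Matrix (Fin k) (Fin k) ℝ)
    (x : Fin k × Fin n → ℝ) :
    x ⬝ᵥ (Matrix.blockDiagonal M).mulVec x
      = ∑ i : Fin n, (fun a => x (a, i)) ⬝ᵥ (M i).mulVec (fun a => x (a, i)) := by
  have inner : ∀ (a : Fin k) (i : Fin n),
      (Matrix.blockDiagonal M).mulVec x (a, i) = ∑ b : Fin k, M i a b * x (b, i) := by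
    intro a i
    simp [Matrix.mulVec, dotProduct, Matrix.blockDiagonal_apply,
      Fintype.sum_prod_type, ite_mul, Finset.sum_ite_eq]
  calc x ⬝ᵥ (Matrix.blockDiagonal M).mulVec x
      = ∑ p : Fin k × Fin n, x p * ∑ b, M p.2 p.1 b * x (b, p.2) := by
        rw [dotProduct]
        apply Finset.sum_congr rfl; intro p _
        rcases p with ⟨a, i⟩
        rw [inner a i]
  _ = ∑ a : Fin k, ∑ i : Fin n, x (a, i) * ∑ b, M i a b * x (b, i) := by
        rw [Fintype.sum_prod_type]
  _ = ∑ i : Fin n, ∑ a : Fin k, x (a, i) * ∑ b, M i a b * x (b, i) := Finset.sum_comm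
  _ = ∑ i : Fin n, (fun a => x (a, i)) ⬝ᵥ (M i).mulVec (fun a => x (a, i)) := by
        apply Finset.sum_congr rfl; intro i _
        simp [Matrix.mulVec, dotProduct]

lemma posSemidef_blockDiagonal_iff {n k : ℕ} (M : Fin n → Matrix (Fin k) (Fin k) ℝ) :
    (Matrix.blockDiagonal M).PosSemidef ↔ ∀ i, (M i).PosSemidef := by
  constructor
  · intro h i
    refine Matrix.PosSemidef.of_dotProduct_mulVec_nonneg ?_ ?_
    · have hh := h.1
      rw [Matrix.IsHermitian] at hh ⊢
      ext a bb
      have h2 := congrFun (congrFun hh (a, i)) (bb, i)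
      rw [Matrix.conjTranspose_apply] at h2 ⊢
      simpa [Matrix.blockDiagonal_apply] using h2
    · intro y
      have h2 := h.dotProduct_mulVec_nonneg (fun p : Fin k × Fin n => if p.2 = i then y p.1 else 0)
      rw [star_vec, blockDiagonal_quad] at h2
      have h3 : (∑ j : Fin n,
          (fun a => (fun p : Fin k × Fin n => if p.2 = i then y p.1 else 0) (a, j)) ⬝ᵥ
            (M j).mulVec
              (fun a => (fun p : Fin k × Fin n => if p.2 = i then y p.1 else 0) (a, j)))
          = y ⬝ᵥ (M i).mulVec y := by
        rw [Finset.sum_eq_single i]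
        · simp
        · intro j _ hji
          simp [hji]
        · intro hni
          exact absurd (Finset.mem_univ i) hni
      rw [h3] at h2
      rw [star_vec]
      exact h2
  · intro h
    refine Matrix.PosSemidef.of_dotProduct_mulVec_nonneg ?_ ?_
    · have hfun : (fun i => (M i)ᴴ) = M := funext fun i => (h i).1
      rw [Matrix.IsHermitian, Matrix.blockDiagonal_conjTranspose, hfun]
    · intro x
      rw [star_vec, blockDiagonal_quad]
      apply Finset.sum_nonneg
      intro i _
      have h2 := (h i).dotProduct_mulVec_nonneg (fun a => x (a, i))
      rwa [star_vec] at h2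

end Aux5


/-- Let `P₁, …, P_n` be a representative system of the `d`-dimensional
Delone polytopes of `Q` (vertex-set `ℤ^d`) up to equivalence with respect to `Q`, and for
each `Pᵢ` choose a `d`-simplex with vertices among those of `Pᵢ` (one vertex translated to
`bᵢ`, edge vectors `Lᵢ`).  Then `μ(Q) ≤ 1` iff the block diagonal matrix with blocks
`BR_{Lᵢ}(Q)` is positive semidefinite. -/
theorem statement17 (d n : ℕ) (Q : Md d) (hQ : Q.PosDef)
    (P : Fin n → Set (Fin d → ℝ))
    (hdel : ∀ i, IsDelonePoly (latticeZ d) Q (P i) ∧ sdim (P i) = d)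
    (hinequiv : ∀ i j : Fin n, i ≠ j → ¬ EquivPolyQ Q (P i) (P j))
    (hrep : ∀ S : Set (Fin d → ℝ), IsDelonePoly (latticeZ d) Q S → sdim S = d →
      ∃ i, EquivPolyQ Q (P i) S)
    (b : Fin n → (Fin d → ℝ)) (L : Fin n → Fin d → (Fin d → ℝ))
    (hb : ∀ i, b i ∈ latticeZ d ∩ P i)
    (hL : ∀ i j, b i + L i j ∈ latticeZ d ∩ P i)
    (hLind : ∀ i, LinearIndependent ℝ (L i)) :
    InhomMin Q ≤ 1 ↔
      (Matrix.blockDiagonal fun i : Fin n => BRmat Q (L i)).PosSemidef := by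
  have hT := transpose_eq_of_posdef hQ
  obtain ⟨xs, hxs⟩ := exists_fm_max hQ
  constructor
  · -- forward direction
    intro hmu
    rw [posSemidef_blockDiagonal_iff]
    intro i
    obtain ⟨⟨S, hSsub, hSne, hPhull, c, r, hsph, hout⟩, hsdim⟩ := hdel i
    have hlow : ∀ v : Fin d → ℤ, r^2 ≤ qf Q (c - intVec v) := by
      intro v
      by_cases hv : intVec v ∈ S
      · exact le_of_eq (hsph _ hv).symm
      · exact le_of_lt (hout _ ⟨v, rfl⟩ hv)
    have hfmc : fm Q c = r^2 := by
      obtain ⟨s₀, hs₀⟩ := hSne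
      obtain ⟨vz, hvz⟩ := hSsub hs₀
      apply le_antisymm
      · calc fm Q c ≤ qf Q (c - intVec vz) := fm_le hQ c vz
        _ = r^2 := by rw [hvz]; exact hsph _ hs₀
      · exact le_ciInf hlow
    have hr1 : r^2 ≤ 1 := by
      have hbdd : BddAbove (Set.range (fm Q)) := by
        refine ⟨fm Q xs, ?_⟩
        rintro y ⟨x, rfl⟩
        exact hxs x
      have h1 : fm Q c ≤ InhomMin Q := by
        rw [inhomMin_eq]
        exact le_ciSup hbdd c
      rw [hfmc] at h1
      linarith
    have hbP : b i ∈ convexHull ℝ S := by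
      have := (hb i).2; rwa [hPhull] at this
    have hbS := lattice_mem_hull hQ hsph hout (hb i).1 hbP
    have hLS : ∀ j, qf Q ((c - b i) - L i j) = r^2 := by
      intro j
      have hmem : b i + L i j ∈ convexHull ℝ S := by
        have := (hL i j).2; rwa [hPhull] at this
      have h2 := (lattice_mem_hull hQ hsph hout (hL i j).1 hmem).2
      have heq : c - (b i + L i j) = (c - b i) - L i j := by abel
      rwa [heq] at h2
    have hid : ∀ j, bip Q (L i j) (L i j) = 2 * bip Q (c - b i) (L i j) := by
      intro j
      have h1 := hLS j
      rw [qf_sub hT] at h1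
      have h2 : qf Q (c - b i) = r^2 := hbS.2
      have h3 : qf Q (L i j) = bip Q (L i j) (L i j) := rfl
      linarith
    refine BR_psd_of_radius hQ (L i) (c - b i) ?_ hid
    rw [hbS.2]; exact hr1
  · -- backward direction
    intro hpsd
    rw [posSemidef_blockDiagonal_iff] at hpsd
    rw [inhomMin_eq]
    apply ciSup_le
    intro x
    have hxle : fm Q x ≤ fm Q xs := hxs x
    suffices hle1 : fm Q xs ≤ 1 by linarith
    obtain ⟨S, hSsub, hSne, hsph, hout, hspan⟩ := exists_good_cell hQ xs hxs
    have hr2nn : 0 ≤ fm Q xs := fm_nonneg hQ xs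
    have hdel' : IsDelonePoly (latticeZ d) Q (convexHull ℝ S) := by
      refine ⟨S, hSsub, hSne, rfl, xs, Real.sqrt (fm Q xs), ?_, ?_⟩
      · intro v hv; rw [Real.sq_sqrt hr2nn]; exact hsph v hv
      · intro v hv hvS; rw [Real.sq_sqrt hr2nn]; exact hout v hv hvS
    have hsdim' : sdim (convexHull ℝ S) = d := by
      rw [sdim]
      have h1 : vectorSpan ℝ (convexHull ℝ S) = vectorSpan ℝ S := by
        rw [← direction_affineSpan, affineSpan_convexHull, direction_affineSpan]
      rw [h1, hspan, finrank_top, Module.finrank_fintype_fun_eq_card, Fintype.card_fin]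
    obtain ⟨i, U, hUuni, hUQ, t, hPeq⟩ := hrep (convexHull ℝ S) hdel' hsdim'
    let φA : (Fin d → ℝ) →ᵃ[ℝ] (Fin d → ℝ) :=
      { toFun := fun z => intVec t + (rmat U).mulVec z
        linear := (rmat U).mulVecLin
        map_vadd' := by
          intro p v
          simp only [vadd_eq_add, Matrix.mulVecLin_apply, Matrix.mulVec_add]
          abel }
    have hφdef : ∀ z, φA z = intVec t + (rmat U).mulVec z := fun z => rfl
    have hφhull : (fun z => intVec t + (rmat U).mulVec z) '' (convexHull ℝ S)
        = convexHull ℝ ((fun z => intVec t + (rmat U).mulVec z) '' S) := by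
      have := φA.image_convexHull S
      exact this
    set S' : Set (Fin d → ℝ) := (fun z => intVec t + (rmat U).mulVec z) '' S with hS'def
    set cphi : Fin d → ℝ := intVec t + (rmat U).mulVec xs with hcphi
    have hqφ : ∀ z : Fin d → ℝ,
        qf Q (cphi - (intVec t + (rmat U).mulVec z)) = qf Q (xs - z) := by
      intro z
      have heq : cphi - (intVec t + (rmat U).mulVec z) = (rmat U).mulVec (xs - z) := by
        rw [hcphi]
        have := (rmat U).mulVecLin.map_sub xs z
        simp only [Matrix.mulVecLin_apply] at this
        rw [this]; abel
      rw [heq, qf_rmat_conj hUQ]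
    have hsph' : ∀ y ∈ S', qf Q (cphi - y) = fm Q xs := by
      rintro _ ⟨s, hsS, rfl⟩
      rw [hqφ]
      exact hsph s hsS
    have hout' : ∀ y ∈ latticeZ d, y ∉ S' → fm Q xs < qf Q (cphi - y) := by
      rintro _ ⟨wz, rfl⟩ hyS'
      obtain ⟨vz, hvz⟩ := exists_int_preimage hUuni (wz - t)
      have hy : intVec wz = intVec t + (rmat U).mulVec (intVec vz) := by
        have harg : t + (wz - t) = wz := by abel
        rw [rmat_mulVec_intVec, hvz, ← intVec_add, harg]
      have hvznotS : intVec vz ∉ S := by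
        intro hmem
        exact hyS' ⟨intVec vz, hmem, hy.symm⟩
      have h1 := hout (intVec vz) ⟨vz, rfl⟩ hvznotS
      rw [hy, hqφ]
      exact h1
    have hbP : b i ∈ convexHull ℝ S' := by
      have h1 := (hb i).2
      rw [hPeq, hφhull] at h1
      exact h1
    have hbS' := lattice_mem_hull hQ hsph' hout' (hb i).1 hbP
    have hLS' : ∀ j, qf Q ((cphi - b i) - L i j) = fm Q xs := by
      intro j
      have hmem : b i + L i j ∈ convexHull ℝ S' := by
        have h1 := (hL i j).2
        rw [hPeq, hφhull] at h1
        exact h1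
      have h2 := (lattice_mem_hull hQ hsph' hout' (hL i j).1 hmem).2
      have heq : cphi - (b i + L i j) = (cphi - b i) - L i j := by abel
      rwa [heq] at h2
    have hid : ∀ j, bip Q (L i j) (L i j) = 2 * bip Q (cphi - b i) (L i j) := by
      intro j
      have h1 := hLS' j
      rw [qf_sub hT] at h1
      have h2 : qf Q (cphi - b i) = fm Q xs := hbS'.2
      have h3 : qf Q (L i j) = bip Q (L i j) (L i j) := rfl
      linarith
    have hfin := radius_le_one_of_BR_psd hQ (L i) (hLind i) (cphi - b i) hid (hpsd i)
    rw [hbS'.2] at hfin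
    exact hfin

end Vor

end
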